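/- Anti-aligned Bloch vectors lie on a body diagonal: for any real phases α_{z,x}, if the two single-qubit Bloch vectors of ψ are opposite, i.e. x₁ = −x₂, y₁ = −y₂ and z₁ = −z₂, then |x₁| = |y₁| = |z₁|, i.e. the common Bloch vector points along a direction (±1,±1,±1) (possibly of length zero). -/

import Mathlib

open Matrix Complex Finset Kronecker

/-- Pauli X. -/
noncomputable def X2 : Matrix (Fin 2) (Fin 2) ℂ := !![0, 1; 1, 0]

/-- Pauli Y. -/
noncomputable def Y2 : Matrix (Fin 2) (Fin 2) ℂ := !![0, -Complex.I; Complex.I, 0]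

/-- Pauli Z. -/
noncomputable def Z2 : Matrix (Fin 2) (Fin 2) ℂ := !![1, 0; 0, -1]

/-- The inner product ⟨f, g⟩ = Σ conj(f v) g v (antilinear in the first argument). -/
noncomputable def dotc {ι : Type*} [Fintype ι] (f g : ι → ℂ) : ℂ :=
  ∑ v, (starRingEnd ℂ) (f v) * g v

/-- Two-qubit computational basis vector |ab⟩. -/
noncomputable def bv (a b : Fin 2) : Fin 2 × Fin 2 → ℂ := fun p => if p = (a, b) then 1 else 0

/-- Bell state Φ_{0,0} = (|00⟩+|11⟩)/√2. -/
noncomputable def Bell00 : Fin 2 × Fin 2 → ℂ := (Real.sqrt 2 : ℂ)⁻¹ • (bv 0 0 + bv 1 1)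

/-- Bell state Φ_{0,1} = (|00⟩−|11⟩)/√2. -/
noncomputable def Bell01 : Fin 2 × Fin 2 → ℂ := (Real.sqrt 2 : ℂ)⁻¹ • (bv 0 0 - bv 1 1)

/-- Bell state Φ_{1,0} = (|01⟩+|10⟩)/√2. -/
noncomputable def Bell10 : Fin 2 × Fin 2 → ℂ := (Real.sqrt 2 : ℂ)⁻¹ • (bv 0 1 + bv 1 0)

/-- Bell state Φ_{1,1} = (−|01⟩+|10⟩)/√2. -/
noncomputable def Bell11 : Fin 2 × Fin 2 → ℂ := (Real.sqrt 2 : ℂ)⁻¹ • (-(bv 0 1) + bv 1 0)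

/-- The fiducial state ψ = (1/2) Σ_{z,x} e^{iα_{z,x}} Φ_{z,x}. -/
noncomputable def psiF (α : Fin 2 → Fin 2 → ℝ) : Fin 2 × Fin 2 → ℂ :=
  (1 / 2 : ℂ) • (Complex.exp ((α 0 0 : ℝ) * Complex.I) • Bell00 +
    Complex.exp ((α 0 1 : ℝ) * Complex.I) • Bell01 +
    Complex.exp ((α 1 0 : ℝ) * Complex.I) • Bell10 +
    Complex.exp ((α 1 1 : ℝ) * Complex.I) • Bell11)

/-- Bloch component x₁ = ⟨ψ,(X⊗I)ψ⟩. -/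
noncomputable def blochX1 (α : Fin 2 → Fin 2 → ℝ) : ℂ :=
  dotc (psiF α) ((X2 ⊗ₖ (1 : Matrix (Fin 2) (Fin 2) ℂ)) *ᵥ psiF α)

/-- Bloch component y₁ = ⟨ψ,(Y⊗I)ψ⟩. -/
noncomputable def blochY1 (α : Fin 2 → Fin 2 → ℝ) : ℂ :=
  dotc (psiF α) ((Y2 ⊗ₖ (1 : Matrix (Fin 2) (Fin 2) ℂ)) *ᵥ psiF α)

/-- Bloch component z₁ = ⟨ψ,(Z⊗I)ψ⟩. -/
noncomputable def blochZ1 (α : Fin 2 → Fin 2 → ℝ) : ℂ :=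
  dotc (psiF α) ((Z2 ⊗ₖ (1 : Matrix (Fin 2) (Fin 2) ℂ)) *ᵥ psiF α)

/-- Bloch component x₂ = ⟨ψ,(I⊗X)ψ⟩. -/
noncomputable def blochX2 (α : Fin 2 → Fin 2 → ℝ) : ℂ :=
  dotc (psiF α) (((1 : Matrix (Fin 2) (Fin 2) ℂ) ⊗ₖ X2) *ᵥ psiF α)

/-- Bloch component y₂ = ⟨ψ,(I⊗Y)ψ⟩. -/
noncomputable def blochY2 (α : Fin 2 → Fin 2 → ℝ) : ℂ :=
  dotc (psiF α) (((1 : Matrix (Fin 2) (Fin 2) ℂ) ⊗ₖ Y2) *ᵥ psiF α)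

/-- Bloch component z₂ = ⟨ψ,(I⊗Z)ψ⟩. -/
noncomputable def blochZ2 (α : Fin 2 → Fin 2 → ℝ) : ℂ :=
  dotc (psiF α) (((1 : Matrix (Fin 2) (Fin 2) ℂ) ⊗ₖ Z2) *ᵥ psiF α)

section Aux

variable (α : Fin 2 → Fin 2 → ℝ)

lemma blochX1_val : blochX1 α =
    (((Real.cos (α 0 0 - α 1 0) + Real.cos (α 0 1 - α 1 1))/2 : ℝ) : ℂ) := by
  have h2 : ((Real.sqrt 2 : ℝ) : ℂ)⁻¹ ^ 2 = 2⁻¹ := by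
    rw [inv_pow]
    norm_cast
    rw [Real.sq_sqrt (by norm_num)]
    norm_num
  simp only [blochX1, dotc, psiF, Bell00, Bell01, Bell10, Bell11, bv, mulVec, dotProduct,
    Fintype.sum_prod_type, Fin.sum_univ_two, kroneckerMap_apply, X2, Matrix.one_apply,
    Pi.smul_apply, Pi.add_apply, Pi.sub_apply, Pi.neg_apply, smul_eq_mul,
    Matrix.cons_val', Matrix.cons_val_zero, Matrix.cons_val_one, Matrix.head_cons,
    Matrix.head_fin_const, Matrix.empty_val', Matrix.cons_val_fin_one]
  norm_num [Prod.ext_iff]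
  simp only [Complex.exp_mul_I, ← Complex.ofReal_cos, ← Complex.ofReal_sin,
    Real.cos_sub, Real.sin_sub, map_add, _root_.map_mul, map_sub, map_neg, map_ofNat,
    Complex.conj_ofReal, Complex.conj_I]
  push_cast
  ring_nf
  rw [h2]
  ring_nf
  simp [Complex.I_sq]
  ring_nf
  simp only [Complex.cos_sub, Complex.sin_sub]
  ring

lemma blochX2_val : blochX2 α =
    (((Real.cos (α 0 0 - α 1 0) - Real.cos (α 0 1 - α 1 1))/2 : ℝ) : ℂ) := by
  have h2 : ((Real.sqrt 2 : ℝ) : ℂ)⁻¹ ^ 2 = 2⁻¹ := by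
    rw [inv_pow]
    norm_cast
    rw [Real.sq_sqrt (by norm_num)]
    norm_num
  simp only [blochX2, dotc, psiF, Bell00, Bell01, Bell10, Bell11, bv, mulVec, dotProduct,
    Fintype.sum_prod_type, Fin.sum_univ_two, kroneckerMap_apply, X2, Matrix.one_apply,
    Pi.smul_apply, Pi.add_apply, Pi.sub_apply, Pi.neg_apply, smul_eq_mul,
    Matrix.cons_val', Matrix.cons_val_zero, Matrix.cons_val_one, Matrix.head_cons,
    Matrix.head_fin_const, Matrix.empty_val', Matrix.cons_val_fin_one]
  norm_num [Prod.ext_iff]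
  simp only [Complex.exp_mul_I, ← Complex.ofReal_cos, ← Complex.ofReal_sin,
    Real.cos_sub, Real.sin_sub, map_add, _root_.map_mul, map_sub, map_neg, map_ofNat,
    Complex.conj_ofReal, Complex.conj_I]
  push_cast
  ring_nf
  rw [h2]
  ring_nf
  simp [Complex.I_sq]
  ring_nf
  simp only [Complex.cos_sub, Complex.sin_sub]
  ring

lemma blochY1_val : blochY1 α =
    (((Real.sin (α 1 1 - α 0 0) + Real.sin (α 1 0 - α 0 1))/2 : ℝ) : ℂ) := by
  have h2 : ((Real.sqrt 2 : ℝ) : ℂ)⁻¹ ^ 2 = 2⁻¹ := by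
    rw [inv_pow]
    norm_cast
    rw [Real.sq_sqrt (by norm_num)]
    norm_num
  simp only [blochY1, dotc, psiF, Bell00, Bell01, Bell10, Bell11, bv, mulVec, dotProduct,
    Fintype.sum_prod_type, Fin.sum_univ_two, kroneckerMap_apply, Y2, Matrix.one_apply,
    Pi.smul_apply, Pi.add_apply, Pi.sub_apply, Pi.neg_apply, smul_eq_mul,
    Matrix.cons_val', Matrix.cons_val_zero, Matrix.cons_val_one, Matrix.head_cons,
    Matrix.head_fin_const, Matrix.empty_val', Matrix.cons_val_fin_one]
  norm_num [Prod.ext_iff]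
  simp only [Complex.exp_mul_I, ← Complex.ofReal_cos, ← Complex.ofReal_sin,
    Real.cos_sub, Real.sin_sub, map_add, _root_.map_mul, map_sub, map_neg, map_ofNat,
    Complex.conj_ofReal, Complex.conj_I]
  push_cast
  ring_nf
  rw [h2]
  ring_nf
  simp [Complex.I_sq]
  ring_nf
  simp only [Complex.cos_sub, Complex.sin_sub]
  ring

lemma blochY2_val : blochY2 α =
    (((Real.sin (α 1 0 - α 0 1) - Real.sin (α 1 1 - α 0 0))/2 : ℝ) : ℂ) := by
  have h2 : ((Real.sqrt 2 : ℝ) : ℂ)⁻¹ ^ 2 = 2⁻¹ := by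
    rw [inv_pow]
    norm_cast
    rw [Real.sq_sqrt (by norm_num)]
    norm_num
  simp only [blochY2, dotc, psiF, Bell00, Bell01, Bell10, Bell11, bv, mulVec, dotProduct,
    Fintype.sum_prod_type, Fin.sum_univ_two, kroneckerMap_apply, Y2, Matrix.one_apply,
    Pi.smul_apply, Pi.add_apply, Pi.sub_apply, Pi.neg_apply, smul_eq_mul,
    Matrix.cons_val', Matrix.cons_val_zero, Matrix.cons_val_one, Matrix.head_cons,
    Matrix.head_fin_const, Matrix.empty_val', Matrix.cons_val_fin_one]
  norm_num [Prod.ext_iff]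
  simp only [Complex.exp_mul_I, ← Complex.ofReal_cos, ← Complex.ofReal_sin,
    Real.cos_sub, Real.sin_sub, map_add, _root_.map_mul, map_sub, map_neg, map_ofNat,
    Complex.conj_ofReal, Complex.conj_I]
  push_cast
  ring_nf
  rw [h2]
  ring_nf
  simp [Complex.I_sq]
  ring_nf
  simp only [Complex.cos_sub, Complex.sin_sub]
  ring

lemma blochZ1_val : blochZ1 α =
    (((Real.cos (α 0 0 - α 0 1) - Real.cos (α 1 0 - α 1 1))/2 : ℝ) : ℂ) := by
  have h2 : ((Real.sqrt 2 : ℝ) : ℂ)⁻¹ ^ 2 = 2⁻¹ := by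
    rw [inv_pow]
    norm_cast
    rw [Real.sq_sqrt (by norm_num)]
    norm_num
  simp only [blochZ1, dotc, psiF, Bell00, Bell01, Bell10, Bell11, bv, mulVec, dotProduct,
    Fintype.sum_prod_type, Fin.sum_univ_two, kroneckerMap_apply, Z2, Matrix.one_apply,
    Pi.smul_apply, Pi.add_apply, Pi.sub_apply, Pi.neg_apply, smul_eq_mul,
    Matrix.cons_val', Matrix.cons_val_zero, Matrix.cons_val_one, Matrix.head_cons,
    Matrix.head_fin_const, Matrix.empty_val', Matrix.cons_val_fin_one]
  norm_num [Prod.ext_iff]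
  simp only [Complex.exp_mul_I, ← Complex.ofReal_cos, ← Complex.ofReal_sin,
    Real.cos_sub, Real.sin_sub, map_add, _root_.map_mul, map_sub, map_neg, map_ofNat,
    Complex.conj_ofReal, Complex.conj_I]
  push_cast
  ring_nf
  rw [h2]
  ring_nf
  simp [Complex.I_sq]
  ring_nf
  simp only [Complex.cos_sub, Complex.sin_sub]
  ring

lemma blochZ2_val : blochZ2 α =
    (((Real.cos (α 0 0 - α 0 1) + Real.cos (α 1 0 - α 1 1))/2 : ℝ) : ℂ) := by
  have h2 : ((Real.sqrt 2 : ℝ) : ℂ)⁻¹ ^ 2 = 2⁻¹ := by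
    rw [inv_pow]
    norm_cast
    rw [Real.sq_sqrt (by norm_num)]
    norm_num
  simp only [blochZ2, dotc, psiF, Bell00, Bell01, Bell10, Bell11, bv, mulVec, dotProduct,
    Fintype.sum_prod_type, Fin.sum_univ_two, kroneckerMap_apply, Z2, Matrix.one_apply,
    Pi.smul_apply, Pi.add_apply, Pi.sub_apply, Pi.neg_apply, smul_eq_mul,
    Matrix.cons_val', Matrix.cons_val_zero, Matrix.cons_val_one, Matrix.head_cons,
    Matrix.head_fin_const, Matrix.empty_val', Matrix.cons_val_fin_one]
  norm_num [Prod.ext_iff]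
  simp only [Complex.exp_mul_I, ← Complex.ofReal_cos, ← Complex.ofReal_sin,
    Real.cos_sub, Real.sin_sub, map_add, _root_.map_mul, map_sub, map_neg, map_ofNat,
    Complex.conj_ofReal, Complex.conj_I]
  push_cast
  ring_nf
  rw [h2]
  ring_nf
  simp [Complex.I_sq]
  ring_nf
  simp only [Complex.cos_sub, Complex.sin_sub]
  ring

end Aux


/-!
STATEMENT 10: Anti-aligned Bloch vectors lie on a body diagonal:
if r₁ = −r₂ then |x₁| = |y₁| = |z₁|.
-/
theorem stmt10 (α : Fin 2 → Fin 2 → ℝ)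
    (hx : blochX1 α = -blochX2 α) (hy : blochY1 α = -blochY2 α)
    (hz : blochZ1 α = -blochZ2 α) :
    ‖blochX1 α‖ = ‖blochY1 α‖ ∧
    ‖blochY1 α‖ = ‖blochZ1 α‖ := by
  -- extract real equations from the hypotheses
  have hu : Real.cos (α 0 0 - α 1 0) = 0 := by
    rw [blochX1_val, blochX2_val, ← Complex.ofReal_neg] at hx
    have := Complex.ofReal_inj.mp hx
    linarith
  have hq : Real.sin (α 1 0 - α 0 1) = 0 := by
    rw [blochY1_val, blochY2_val, ← Complex.ofReal_neg] at hy
    have := Complex.ofReal_inj.mp hy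
    linarith
  have hr : Real.cos (α 0 0 - α 0 1) = 0 := by
    rw [blochZ1_val, blochZ2_val, ← Complex.ofReal_neg] at hz
    have := Complex.ofReal_inj.mp hz
    linarith
  -- key identities
  have e1 : Real.sin (α 1 1 - α 0 0) =
      Real.cos (α 1 1 - α 0 1) * Real.sin (α 0 1 - α 0 0) := by
    have h := Real.sin_add (α 1 1 - α 0 1) (α 0 1 - α 0 0)
    rw [show α 1 1 - α 0 1 + (α 0 1 - α 0 0) = α 1 1 - α 0 0 by ring] at h
    have hc : Real.cos (α 0 1 - α 0 0) = 0 := by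
      rw [show α 0 1 - α 0 0 = -(α 0 0 - α 0 1) by ring, Real.cos_neg, hr]
    rw [h, hc]
    ring
  have e2 : Real.cos (α 1 0 - α 1 1) =
      Real.cos (α 1 0 - α 0 1) * Real.cos (α 0 1 - α 1 1) := by
    have h := Real.cos_add (α 1 0 - α 0 1) (α 0 1 - α 1 1)
    rw [show α 1 0 - α 0 1 + (α 0 1 - α 1 1) = α 1 0 - α 1 1 by ring] at h
    rw [h, hq]
    ring
  have habs1 : |Real.sin (α 0 1 - α 0 0)| = 1 := by
    have h := Real.sin_sq_add_cos_sq (α 0 1 - α 0 0)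
    have hc : Real.cos (α 0 1 - α 0 0) = 0 := by
      rw [show α 0 1 - α 0 0 = -(α 0 0 - α 0 1) by ring, Real.cos_neg, hr]
    rw [← Real.sqrt_sq_eq_abs, show Real.sin (α 0 1 - α 0 0) ^ 2 = 1 by nlinarith]
    exact Real.sqrt_one
  have habs2 : |Real.cos (α 1 0 - α 0 1)| = 1 := by
    have h := Real.sin_sq_add_cos_sq (α 1 0 - α 0 1)
    rw [← Real.sqrt_sq_eq_abs, show Real.cos (α 1 0 - α 0 1) ^ 2 = 1 by nlinarith]
    exact Real.sqrt_one
  have key1 : |Real.sin (α 1 1 - α 0 0)| = |Real.cos (α 0 1 - α 1 1)| := by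
    rw [e1, abs_mul, habs1, mul_one,
      show α 1 1 - α 0 1 = -(α 0 1 - α 1 1) by ring, Real.cos_neg]
  have key2 : |Real.cos (α 1 0 - α 1 1)| = |Real.cos (α 0 1 - α 1 1)| := by
    rw [e2, abs_mul, habs2, one_mul]
  rw [blochX1_val, blochY1_val, blochZ1_val, hu, hq, hr]
  simp only [Complex.norm_real, Real.norm_eq_abs, zero_add, add_zero, zero_sub]
  constructor
  · simp only [abs_div]
    rw [key1]
  · simp only [abs_div, abs_neg]
    rw [key1, key2]
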